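/- Let m, a, k_x, k_v > 0 and θ ∈ (0,1) with θ < a k_v²/(a k_v² + m k_x) and θ < δ₁ + δ₂ where δ₁ = 2k_v²√(4k_x⁴k_v⁴a⁴ + 4k_x⁵k_v²a³m + 2k_x⁶m²a²)/(k_x⁴m²) and δ₂ = -4a²k_v⁴/(m²k_x²) - 2a k_v²/(m k_x). Then the symmetric matrix Π₁ = [[a k_x²(1-θ), -a k_x k_v θ - m k_x²θ/(2k_v)], [-a k_x k_v θ - m k_x²θ/(2k_v), a k_v² - θ(m k_x + a k_v²)]] is positive definite. -/

import Mathlib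

open Matrix

set_option maxHeartbeats 1000000 in
theorem stmt15 (m a kx kv θ : ℝ) (hm : 0 < m) (ha : 0 < a) (hkx : 0 < kx) (hkv : 0 < kv)
    (hθ0 : 0 < θ) (hθ1 : θ < 1)
    (hθa : θ < a * kv ^ 2 / (a * kv ^ 2 + m * kx))
    (hθb : θ < 2 * kv ^ 2 * Real.sqrt (4 * kx ^ 4 * kv ^ 4 * a ^ 4 +
            4 * kx ^ 5 * kv ^ 2 * a ^ 3 * m + 2 * kx ^ 6 * m ^ 2 * a ^ 2) / (kx ^ 4 * m ^ 2)
          + (-(4 * a ^ 2 * kv ^ 4 / (m ^ 2 * kx ^ 2)) - 2 * a * kv ^ 2 / (m * kx))) :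
    (!![a * kx ^ 2 * (1 - θ), -(a * kx * kv * θ) - m * kx ^ 2 * θ / (2 * kv);
        -(a * kx * kv * θ) - m * kx ^ 2 * θ / (2 * kv),
        a * kv ^ 2 - θ * (m * kx + a * kv ^ 2)] : Matrix (Fin 2) (Fin 2) ℝ).PosDef := by
  set A : ℝ := a * kx ^ 2 * (1 - θ) with hA
  set B : ℝ := -(a * kx * kv * θ) - m * kx ^ 2 * θ / (2 * kv) with hB
  set C : ℝ := a * kv ^ 2 - θ * (m * kx + a * kv ^ 2) with hC
  have hApos : 0 < A := by
    have : 0 < 1 - θ := by linarith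
    positivity
  -- sqrt facts
  set D : ℝ := 4 * kx ^ 4 * kv ^ 4 * a ^ 4 +
      4 * kx ^ 5 * kv ^ 2 * a ^ 3 * m + 2 * kx ^ 6 * m ^ 2 * a ^ 2 with hD
  have hDnn : 0 ≤ D := by positivity
  set s : ℝ := Real.sqrt D with hs
  have hs0 : 0 ≤ s := Real.sqrt_nonneg _
  have hs2 : s ^ 2 = D := Real.sq_sqrt hDnn
  -- clear denominators in hθb:
  have hb' : θ * (kx ^ 4 * m ^ 2) + 4 * a ^ 2 * kv ^ 4 * kx ^ 2 + 2 * a * kv ^ 2 * kx ^ 3 * m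
      < 2 * kv ^ 2 * s := by
    have h1 : 0 < kx ^ 4 * m ^ 2 := by positivity
    rw [div_add' _ _ _ (ne_of_gt h1), lt_div_iff₀ h1] at hθb
    have heq : (-(4 * a ^ 2 * kv ^ 4 / (m ^ 2 * kx ^ 2)) - 2 * a * kv ^ 2 / (m * kx))
        * (kx ^ 4 * m ^ 2) = -(4 * a ^ 2 * kv ^ 4 * kx ^ 2) - 2 * a * kv ^ 2 * kx ^ 3 * m := by
      field_simp
    nlinarith [hθb, heq]
  -- key quadratic inequality: f θ < 0
  have hf : m ^ 2 * kx ^ 2 * θ ^ 2 + 4 * a * kv ^ 2 * (m * kx + 2 * a * kv ^ 2) * θ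
      - 4 * a ^ 2 * kv ^ 4 < 0 := by
    have hL : 0 < θ * (kx ^ 4 * m ^ 2) + 4 * a ^ 2 * kv ^ 4 * kx ^ 2 + 2 * a * kv ^ 2 * kx ^ 3 * m := by
      positivity
    have hsq : (θ * (kx ^ 4 * m ^ 2) + 4 * a ^ 2 * kv ^ 4 * kx ^ 2 + 2 * a * kv ^ 2 * kx ^ 3 * m) ^ 2
        < (2 * kv ^ 2 * s) ^ 2 := by
      apply sq_lt_sq' _ hb'
      nlinarith [hb', hL]
    rw [mul_pow, mul_pow, hs2, hD] at hsq
    have hx6 : 0 < m ^ 2 * kx ^ 6 := by positivity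
    nlinarith [hsq, hx6]
  -- determinant positive
  have hdet : 0 < A * C - B ^ 2 := by
    have hkvne : (2 * kv) ≠ 0 := by positivity
    have hBeq : B * (2 * kv) = -(θ * (2 * a * kx * kv ^ 2 + m * kx ^ 2)) := by
      rw [hB]; field_simp; ring
    have key : (A * C - B ^ 2) * (4 * kv ^ 2) = kx ^ 2 *
        (4 * a ^ 2 * kv ^ 4 - 4 * a * kv ^ 2 * (m * kx + 2 * a * kv ^ 2) * θ
          - m ^ 2 * kx ^ 2 * θ ^ 2) := by
      have hB2 : B ^ 2 * (4 * kv ^ 2) = (θ * (2 * a * kx * kv ^ 2 + m * kx ^ 2)) ^ 2 := by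
        have h' : B ^ 2 * (4 * kv ^ 2) = (B * (2 * kv)) ^ 2 := by ring
        rw [h', hBeq]; ring
      rw [hA, hC]
      linear_combination (-(1 : ℝ)) * hB2
    have h4 : 0 < 4 * kv ^ 2 := by positivity
    have hrhs : 0 < kx ^ 2 *
        (4 * a ^ 2 * kv ^ 4 - 4 * a * kv ^ 2 * (m * kx + 2 * a * kv ^ 2) * θ
          - m ^ 2 * kx ^ 2 * θ ^ 2) := by
      have : 0 < 4 * a ^ 2 * kv ^ 4 - 4 * a * kv ^ 2 * (m * kx + 2 * a * kv ^ 2) * θ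
          - m ^ 2 * kx ^ 2 * θ ^ 2 := by linarith
      positivity
    nlinarith [key, hrhs, h4]
  rw [Matrix.posDef_iff_dotProduct_mulVec]
  constructor
  · ext i j
    fin_cases i <;> fin_cases j <;>
      simp [Matrix.conjTranspose_apply, Matrix.transpose_apply]
  · intro x hx
    have hx' : x 0 ≠ 0 ∨ x 1 ≠ 0 := by
      by_contra h
      push_neg at h
      apply hx
      ext i; fin_cases i <;> simp [h.1, h.2]
    have hquad : star x ⬝ᵥ (!![A, B; B, C] : Matrix (Fin 2) (Fin 2) ℝ) *ᵥ x
        = A * (x 0) ^ 2 + 2 * B * (x 0) * (x 1) + C * (x 1) ^ 2 := by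
      simp [Matrix.mulVec, dotProduct, Fin.sum_univ_two]
      ring
    rw [hquad]
    have hid : A * (A * (x 0) ^ 2 + 2 * B * (x 0) * (x 1) + C * (x 1) ^ 2)
        = (A * (x 0) + B * (x 1)) ^ 2 + (A * C - B ^ 2) * (x 1) ^ 2 := by ring
    have hpos : 0 < (A * (x 0) + B * (x 1)) ^ 2 + (A * C - B ^ 2) * (x 1) ^ 2 := by
      rcases hx' with h0 | h1
      · rcases eq_or_ne (x 1) 0 with h | h
        · have hA0 : A * x 0 ≠ 0 := mul_ne_zero hApos.ne' h0
          simp only [h, mul_zero, add_zero]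
          positivity
        · have h2 := mul_pos hdet (sq_pos_of_ne_zero h)
          nlinarith [sq_nonneg (A * (x 0) + B * (x 1))]
      · have h2 := mul_pos hdet (sq_pos_of_ne_zero h1)
        nlinarith [sq_nonneg (A * (x 0) + B * (x 1))]
    nlinarith [hpos, hid, hApos]
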